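/- Every lattice tetrahedron in ℤ³ whose only lattice points are its four vertices has lattice width one; that is, there is an affine functional f: ℝ³ → ℝ with f(ℤ³) ⊆ ℤ whose maximum minus minimum over the tetrahedron equals 1. -/

import Mathlib

/-- The inclusion of lattice points of ℤ³ into ℝ³. -/
def toR (p : Fin 3 → ℤ) : Fin 3 → ℝ := fun i => (p i : ℝ)

/-- Evaluation of an integer linear functional on a lattice point. -/
def dotZ (f p : Fin 3 → ℤ) : ℤ := ∑ i, f i * p i


private lemma dotZ_add (a x y : Fin 3 → ℤ) :
    dotZ a (fun t => x t + y t) = dotZ a x + dotZ a y := by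
  simp [dotZ, mul_add, Finset.sum_add_distrib]

private lemma dotZ_smul (a : Fin 3 → ℤ) (c : ℤ) (x : Fin 3 → ℤ) :
    dotZ a (fun t => c * x t) = c * dotZ a x := by
  simp [dotZ, Finset.mul_sum]; apply Finset.sum_congr rfl; intros; ring

private lemma dotZ_sub (a x y : Fin 3 → ℤ) :
    dotZ a (fun t => x t - y t) = dotZ a x - dotZ a y := by
  simp [dotZ, mul_sub, Finset.sum_sub_distrib]

private lemma dotZ_zero (a : Fin 3 → ℤ) : dotZ a (fun _ => 0) = 0 := by
  simp [dotZ]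

private lemma emod_add_neg (D m : ℤ) (hD : 0 < D) :
    m % D + (-m) % D = if m % D = 0 then 0 else D := by
  have h1 : D ∣ (m % D + (-m) % D) := by
    have : (m % D + (-m) % D) % D = (m + -m) % D := by
      rw [Int.add_emod (m % D), Int.emod_emod_of_dvd, Int.emod_emod_of_dvd, ← Int.add_emod]
        <;> exact dvd_refl D
    have h2 : (m + -m) % D = 0 := by simp
    exact Int.dvd_of_emod_eq_zero (by rw [this, h2])
  have hm1 : 0 ≤ m % D := Int.emod_nonneg m (ne_of_gt hD)
  have hm2 : m % D < D := Int.emod_lt_of_pos m hD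
  have hm3 : 0 ≤ (-m) % D := Int.emod_nonneg (-m) (ne_of_gt hD)
  have hm4 : (-m) % D < D := Int.emod_lt_of_pos (-m) hD
  rcases h1 with ⟨t, ht⟩
  have ht' : t = 0 ∨ t = 1 := by
    rcases le_or_gt t 0 with h | h
    · left; nlinarith
    · right; nlinarith
  by_cases h : m % D = 0
  · rw [if_pos h, h, zero_add]
    have hdvd : D ∣ m := Int.dvd_of_emod_eq_zero h
    exact Int.emod_eq_zero_of_dvd (dvd_neg.mpr hdvd)
  · rw [if_neg h]
    rcases ht' with rfl | rfl
    · exfalso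
      apply h
      have h0 : m % D = 0 ∧ (-m) % D = 0 := by
        constructor <;> [linarith [ht]; linarith [ht]]
      exact h0.1
    · linarith [ht]

private lemma exists_inv (s n : ℤ) (hn : 2 ≤ n) (h : Int.gcd s n = 1) :
    ∃ t, 1 ≤ t ∧ t ≤ n - 1 ∧ Int.gcd t n = 1 ∧ n ∣ t * s - 1 := by
  have hb : (1 : ℤ) = s * Int.gcdA s n + n * Int.gcdB s n := by
    have := Int.gcd_eq_gcd_ab s n
    rw [h] at this; exact_mod_cast this
  set α := Int.gcdA s n with hα
  have hn0 : (0:ℤ) < n := by linarith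
  set t := α % n with htdef
  have ht0 : 0 ≤ t := Int.emod_nonneg α (ne_of_gt hn0)
  have htn : t < n := Int.emod_lt_of_pos α hn0
  have hdvd : n ∣ t * s - 1 := by
    have h1 : t = α - n * (α / n) := by rw [htdef, Int.emod_def]
    exact ⟨-(Int.gcdB s n) - (α / n) * s, by rw [h1]; nlinarith [hb]⟩
  have htne : t ≠ 0 := by
    intro h0
    rw [h0, zero_mul] at hdvd
    have := Int.le_of_dvd (by norm_num : (0:ℤ) < 1) (dvd_neg.mp (by simpa using hdvd))
    linarith
  have hgcd : Int.gcd t n = 1 := by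
    have h1 : (Int.gcd t n : ℤ) ∣ 1 := by
      have d1 : (Int.gcd t n : ℤ) ∣ t * s := Dvd.dvd.mul_right (Int.gcd_dvd_left _ _) s
      have d2 : (Int.gcd t n : ℤ) ∣ t * s - 1 := dvd_trans (Int.gcd_dvd_right _ _) hdvd
      simpa using dvd_sub d1 d2
    have h2 := Int.le_of_dvd (by norm_num) h1
    have h3 : Int.gcd t n ≠ 0 := by
      intro hc
      have := Int.gcd_eq_zero_iff.mp hc
      linarith [this.2]
    omega
  exact ⟨t, by omega, by omega, hgcd, hdvd⟩


private lemma emod_eq_sub' (x t n : ℤ) (h0 : 0 ≤ x - t*n) (h1 : x - t*n < n) :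
    x % n = x - t*n := by
  have : x % n = (x - t*n) % n := by
    conv_lhs => rw [show x = (x - t*n) + n*t by ring]
    rw [Int.add_mul_emod_self_left]
  rw [this, Int.emod_eq_of_lt h0 h1]

private lemma emod_le_self' (x n : ℤ) (hx : 0 ≤ x) (hn : 0 < n) : x % n ≤ x := by
  have h := Int.ediv_nonneg hx (le_of_lt hn)
  have := Int.emod_add_mul_ediv x n
  nlinarith [Int.emod_nonneg x (ne_of_gt hn)]

private lemma exists_pq (A B : ℤ) (hA : 2 ≤ A) (hB : 2 ≤ B) :
    ∃ p q e : ℤ, 1 ≤ p ∧ p ≤ A - 1 ∧ 1 ≤ q ∧ q ≤ B - 1 ∧ 0 ≤ e ∧ e ≤ 1 ∧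
      p*B - q*A = e := by
  by_cases hg : Int.gcd A B = 1
  · -- Bezout
    have hb : (1 : ℤ) = A * Int.gcdA A B + B * Int.gcdB A B := by
      have := Int.gcd_eq_gcd_ab A B
      rw [hg] at this; exact_mod_cast this
    set β := Int.gcdB A B with hβ
    have hA0 : (0:ℤ) < A := by linarith
    set p := β % A with hp
    have hp0 : 0 ≤ p := Int.emod_nonneg β (by linarith)
    have hpA : p < A := Int.emod_lt_of_pos β hA0
    have hpne : p ≠ 0 := by
      intro h
      have hdvd : A ∣ β := Int.dvd_of_emod_eq_zero (by rw [← hp, h])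
      have : A ∣ 1 := by
        rcases hdvd with ⟨c, hc⟩
        exact ⟨Int.gcdA A B + c * B, by rw [hb, hc]; ring⟩
      have := Int.le_of_dvd one_pos this
      linarith
    have hdvd : A ∣ p * B - 1 := by
      have h1 : p = β - A * (β / A) := by
        rw [hp, Int.emod_def]
      have : p * B - 1 = -(A * Int.gcdA A B) - A * (β / A) * B := by
        rw [h1]; nlinarith [hb]
      exact ⟨-(Int.gcdA A B) - (β / A) * B, by linarith⟩
    rcases hdvd with ⟨q, hq⟩
    have hp1 : 1 ≤ p := by omega
    have hq1 : 1 ≤ q := by nlinarith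
    have hqB : q ≤ B - 1 := by nlinarith
    exact ⟨p, q, 1, hp1, by omega, hq1, hqB, by norm_num, by norm_num, by linarith⟩
  · -- gcd ≥ 2 : p := A/g, q := B/g, e = 0
    set g : ℤ := (Int.gcd A B : ℤ) with hgdef
    have hgA : g ∣ A := Int.gcd_dvd_left _ _
    have hgB : g ∣ B := Int.gcd_dvd_right _ _
    have hg2 : 2 ≤ g := by
      have h0 : 0 < Int.gcd A B := Int.gcd_pos_of_ne_zero_left B (by intro h; rw [h] at hA; norm_num at hA)
      have : Int.gcd A B ≠ 1 := hg
      omega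
    rcases hgA with ⟨p, hp⟩; rcases hgB with ⟨q, hq⟩
    have hgpos : (0:ℤ) < g := by linarith
    have hp1 : 1 ≤ p := by nlinarith
    have hq1 : 1 ≤ q := by nlinarith
    have hpA : p ≤ A - 1 := by nlinarith
    have hqB : q ≤ B - 1 := by nlinarith
    exact ⟨p, q, 0, hp1, hpA, hq1, hqB, le_refl 0, by norm_num, by nlinarith⟩

private lemma lemX_core (n A B C : ℤ) (hn : 2 ≤ n)
    (hA2 : 2 ≤ A) (hB2 : 2 ≤ B) (hC2 : 2 ≤ C)
    (hAn : A ≤ n - 1) (hBn : B ≤ n - 1)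
    (hCA : C ≤ A) (hCB : C ≤ B)
    (gA : Int.gcd A n = 1) (gB : Int.gcd B n = 1)
    (hsum : A + B + C = n + 1)
    (H : ∀ k, 1 ≤ k → k ≤ n - 1 →
      (k*A) % n + (k*B) % n + (k*C) % n = n + k) : False := by
  have hA0 : (0:ℤ) < A := by linarith
  have hB0 : (0:ℤ) < B := by linarith
  have hn0 : (0:ℤ) < n := by linarith
  obtain ⟨p, q, e, hp1, hpA, hq1, hqB, he0, he1, hpq⟩ := exists_pq A B hA2 hB2
  set k := (p*n) / A with hk
  have hAdvd : ¬ (A ∣ p * n) := by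
    intro h
    have hcop : IsCoprime A n := Int.isCoprime_iff_gcd_eq_one.mpr gA
    have : A ∣ p := hcop.dvd_of_dvd_mul_right h
    have := Int.le_of_dvd (by linarith) this
    linarith
  have hk1 : k * A ≤ p * n := by
    rw [hk]; exact Int.ediv_mul_le (p*n) (ne_of_gt hA0)
  have hklt : k * A < p * n := by
    rcases lt_or_eq_of_le hk1 with h | h
    · exact h
    · exact absurd ⟨k, by linarith⟩ hAdvd
  have hk2 : p * n < (k+1) * A := by
    rw [hk]; exact Int.lt_ediv_add_one_mul_self (p*n) hA0
  have hk1' : 1 ≤ k := by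
    rw [hk]
    rw [Int.le_ediv_iff_mul_le hA0]
    have hpn : 1*n ≤ p*n := mul_le_mul_of_nonneg_right hp1 (le_of_lt hn0)
    linarith
  have hpn1 : p*n ≤ (A-1)*n := mul_le_mul_of_nonneg_right hpA (le_of_lt hn0)
  have hpn2 : (A-1)*n ≤ (n-1)*A := by nlinarith
  have hkn : k ≤ n - 2 := by
    have h1 : k*A < (n-1)*A := by linarith
    have h2 : k < n-1 := lt_of_mul_lt_mul_right h1 (le_of_lt hA0)
    linarith
  have hqk : q * n ≤ (k+1) * B := by
    have h0 : q*A ≤ p*B := by linarith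
    have h1 : (q*A)*n ≤ (p*B)*n := mul_le_mul_of_nonneg_right h0 (le_of_lt hn0)
    have h2 : (p*n)*B ≤ ((k+1)*A)*B := mul_le_mul_of_nonneg_right (le_of_lt hk2) (le_of_lt hB0)
    have h3 : (q*n)*A ≤ ((k+1)*B)*A := by nlinarith [h1, h2]
    exact le_of_mul_le_mul_right h3 hA0
  have hkq : k * B < q * n := by
    by_contra hcon
    push_neg at hcon
    set x := k*B - q*n with hxdef
    set y := p*n - k*A with hydef
    have hx : 0 ≤ x := by rw [hxdef]; linarith
    have hy : 1 ≤ y := by rw [hydef]; linarith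
    have hxy : x*A + y*B = n*e := by
      have h2 : x*A + y*B = n*(p*B - q*A) := by rw [hxdef, hydef]; ring
      rw [hpq] at h2; exact h2
    have he : e = 0 ∨ e = 1 := by omega
    rcases he with he | he
    · rw [he, mul_zero] at hxy
      have e1 : 0 ≤ x*A := mul_nonneg hx (le_of_lt hA0)
      have e2 : 1*B ≤ y*B := mul_le_mul_of_nonneg_right hy (le_of_lt hB0)
      linarith
    · rw [he, mul_one] at hxy
      have hx3 : x = 0 ∨ x = 1 ∨ 2 ≤ x := by omega
      rcases hx3 with hx3 | hx3 | hx3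
      · rw [hx3, zero_mul, zero_add] at hxy
        have hdvd : B ∣ n := ⟨y, by linarith⟩
        have : B ∣ ((Int.gcd B n : ℕ) : ℤ) := Int.dvd_coe_gcd (dvd_refl B) hdvd
        rw [gB] at this
        have := Int.le_of_dvd one_pos this
        linarith
      · rw [hx3, one_mul] at hxy
        have hyB : y*B = B + C - 1 := by linarith
        have hy2 : y = 1 ∨ 2 ≤ y := by omega
        rcases hy2 with hy2 | hy2
        · rw [hy2, one_mul] at hyB; linarith
        · have e2 : 2*B ≤ y*B := mul_le_mul_of_nonneg_right hy2 (le_of_lt hB0)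
          linarith
      · have e1 : 2*A ≤ x*A := mul_le_mul_of_nonneg_right hx3 (le_of_lt hA0)
        have e2 : 1*B ≤ y*B := mul_le_mul_of_nonneg_right hy (le_of_lt hB0)
        linarith
  -- drop equations
  have hsplitA : (k+1)*A = k*A + A := by ring
  have hsplitB : (k+1)*B = k*B + B := by ring
  have hsplitpA : (p-1)*n = p*n - n := by ring
  have hsplitqB : (q-1)*n = q*n - n := by ring
  have hdropA : ((k+1)*A) % n = (k*A) % n + A - n := by
    have e1 : ((k+1)*A) % n = (k+1)*A - p*n :=
      emod_eq_sub' _ p n (by linarith) (by linarith)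
    have e2 : (k*A) % n = k*A - (p-1)*n :=
      emod_eq_sub' _ (p-1) n (by linarith) (by linarith)
    rw [e1, e2]; ring
  have hdropB : ((k+1)*B) % n = (k*B) % n + B - n := by
    have e1 : ((k+1)*B) % n = (k+1)*B - q*n :=
      emod_eq_sub' _ q n (by linarith) (by linarith)
    have e2 : (k*B) % n = k*B - (q-1)*n :=
      emod_eq_sub' _ (q-1) n (by linarith) (by linarith)
    rw [e1, e2]; ring
  have hCC : ((k+1)*C) % n ≤ (k*C) % n + C := by
    have h1 : (k+1)*C = (k*C) + C := by ring
    have hCn' : C % n = C := Int.emod_eq_of_lt (by linarith) (by linarith)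
    have h2 : 0 ≤ (k*C) % n + C := by
      have := Int.emod_nonneg (k*C) (ne_of_gt hn0); linarith
    calc ((k+1)*C) % n = ((k*C) % n + C % n) % n := by rw [h1, Int.add_emod]
    _ = ((k*C) % n + C) % n := by rw [hCn']
    _ ≤ (k*C) % n + C := emod_le_self' _ _ h2 hn0
  have HK := H k (by omega) (by omega)
  have HK1 := H (k+1) (by omega) (by omega)
  linarith

private lemma lemX (n A B C : ℤ) (hn : 2 ≤ n)
    (hA : 1 ≤ A) (hAn : A ≤ n - 1) (hB : 1 ≤ B) (hBn : B ≤ n-1)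
    (hC : 1 ≤ C) (hCn : C ≤ n-1)
    (gA : Int.gcd A n = 1) (gB : Int.gcd B n = 1) (gC : Int.gcd C n = 1)
    (H : ∀ k, 1 ≤ k → k ≤ n - 1 →
      (k*A) % n + (k*B) % n + (k*C) % n = n + k) :
    A = 1 ∨ B = 1 ∨ C = 1 := by
  by_contra hcon
  push_neg at hcon
  obtain ⟨hA1, hB1, hC1⟩ := hcon
  have hA2 : 2 ≤ A := by omega
  have hB2 : 2 ≤ B := by omega
  have hC2 : 2 ≤ C := by omega
  have hn0 : (0:ℤ) < n := by linarith
  have hsum : A + B + C = n + 1 := by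
    have h1 := H 1 (le_refl 1) (by omega)
    rw [one_mul, one_mul, one_mul,
      Int.emod_eq_of_lt (by linarith) (by linarith),
      Int.emod_eq_of_lt (by linarith) (by linarith),
      Int.emod_eq_of_lt (by linarith) (by linarith)] at h1
    linarith
  rcases le_total C A with h1 | h1
  · rcases le_total C B with h2 | h2
    · exact lemX_core n A B C hn hA2 hB2 hC2 hAn hBn h1 h2
        gA gB hsum H
    · exact lemX_core n A C B hn hA2 hC2 hB2 hAn hCn (le_trans h2 h1) h2
        gA gC (by linarith)
        (fun k hk1 hk2 => by have := H k hk1 hk2; linarith)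
  · rcases le_total A B with h2 | h2
    · exact lemX_core n B C A hn hB2 hC2 hA2 hBn hCn h2 h1
        gB gC (by linarith)
        (fun k hk1 hk2 => by have := H k hk1 hk2; linarith)
    · exact lemX_core n A C B hn hA2 hC2 hB2 hAn hCn h2 (le_trans h2 h1)
        gA gC (by linarith)
        (fun k hk1 hk2 => by have := H k hk1 hk2; linarith)



private lemma gcd_two (m nn : ℤ) (hnn : nn ≠ 0) (h : Int.gcd m nn ≠ 1) :
    2 ≤ (Int.gcd m nn : ℤ) := by
  have h0 : Int.gcd m nn ≠ 0 := by
    intro hc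
    exact hnn (Int.gcd_eq_zero_iff.mp hc).2
  have h2 : 2 ≤ Int.gcd m nn := by omega
  exact_mod_cast h2

set_option maxHeartbeats 1000000 in
private lemma exists_u (D : ℤ) (hD : 0 < D) (g : Fin 3 → Fin 3 → ℤ)
    (hE : ∀ x : Fin 3 → ℤ, (∑ i, dotZ (g i) x % D) ≤ D → ∀ i, dotZ (g i) x % D = 0) :
    ∃ u : Fin 3 → ℤ, (u = ![0,1,1] ∨ u = ![1,0,1] ∨ u = ![1,1,0]) ∧
      ∀ x : Fin 3 → ℤ, D ∣ (∑ i, u i * dotZ (g i) x) := by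
  have hnn : ∀ (y : Fin 3 → ℤ) (t : Fin 3), 0 ≤ dotZ (g t) y % D :=
    fun y t => Int.emod_nonneg _ (ne_of_gt hD)
  have hlt : ∀ (y : Fin 3 → ℤ) (t : Fin 3), dotZ (g t) y % D < D :=
    fun y t => Int.emod_lt_of_pos _ hD
  have hnegdot : ∀ (x : Fin 3 → ℤ) (t : Fin 3),
      dotZ (g t) (fun s => -x s) = - dotZ (g t) x := by
    intro x t
    have h := dotZ_smul (g t) (-1) x
    have h2 : (fun s => -x s) = (fun s => (-1) * x s) := by funext s; ring
    rw [h2, h]; ring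
  -- Step A: if one coordinate vanishes mod D, all do.
  have key0 : ∀ (x : Fin 3 → ℤ) (i : Fin 3), dotZ (g i) x % D = 0 →
      ∀ j, dotZ (g j) x % D = 0 := by
    intro x i hi
    by_contra hcon
    push_neg at hcon
    obtain ⟨j, hj⟩ := hcon
    have hSx : D + 1 ≤ ∑ t, dotZ (g t) x % D := by
      by_contra hS; push_neg at hS
      exact hj (hE x (by linarith) j)
    have hj' : dotZ (g j) (fun s => -x s) % D ≠ 0 := by
      rw [hnegdot]
      intro h0
      apply hj
      have hval := emod_add_neg D (dotZ (g j) x) hD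
      by_cases hc : dotZ (g j) x % D = 0
      · exact hc
      · exfalso
        rw [if_neg hc] at hval
        have := hlt x j
        rw [h0] at hval
        linarith
    have hSnx : D + 1 ≤ ∑ t, dotZ (g t) (fun s => -x s) % D := by
      by_contra hS; push_neg at hS
      exact hj' (hE _ (by linarith) j)
    have hpair : ∀ t : Fin 3,
        dotZ (g t) x % D + dotZ (g t) (fun s => -x s) % D ≤ D := by
      intro t
      rw [hnegdot]
      have hval := emod_add_neg D (dotZ (g t) x) hD
      by_cases hc : dotZ (g t) x % D = 0
      · rw [if_pos hc] at hval; linarith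
      · rw [if_neg hc] at hval; linarith
    have hpairi : dotZ (g i) x % D + dotZ (g i) (fun s => -x s) % D = 0 := by
      rw [hnegdot]
      have hval := emod_add_neg D (dotZ (g i) x) hD
      rw [if_pos hi] at hval; exact hval
    have hsplit : ∑ t, (dotZ (g t) x % D + dotZ (g t) (fun s => -x s) % D)
        = (dotZ (g i) x % D + dotZ (g i) (fun s => -x s) % D)
          + ∑ t ∈ Finset.univ.erase i,
              (dotZ (g t) x % D + dotZ (g t) (fun s => -x s) % D) :=
      (Finset.add_sum_erase _ _ (Finset.mem_univ i)).symm
    have hcard : (Finset.univ.erase i).card = 2 := by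
      rw [Finset.card_erase_of_mem (Finset.mem_univ i)]
      simp
    have hbound : ∑ t ∈ Finset.univ.erase i,
        (dotZ (g t) x % D + dotZ (g t) (fun s => -x s) % D) ≤ 2 * D := by
      have h1 := Finset.sum_le_card_nsmul (Finset.univ.erase i)
        (fun t => dotZ (g t) x % D + dotZ (g t) (fun s => -x s) % D) D
        (fun t _ => hpair t)
      rw [hcard] at h1
      simpa [two_nsmul, two_mul] using h1
    have htot : ∑ t, (dotZ (g t) x % D + dotZ (g t) (fun s => -x s) % D)
        = (∑ t, dotZ (g t) x % D) + ∑ t, dotZ (g t) (fun s => -x s) % D :=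
      Finset.sum_add_distrib
    linarith
  -- the subgroup of first coordinates
  set S : AddSubgroup ℤ :=
    { carrier := {j : ℤ | ∃ x : Fin 3 → ℤ, D ∣ dotZ (g 0) x - j}
      zero_mem' := ⟨fun _ => 0, by rw [dotZ_zero]; simp⟩
      add_mem' := by
        rintro a b ⟨xa, ha⟩ ⟨xb, hb⟩
        refine ⟨fun t => xa t + xb t, ?_⟩
        rw [dotZ_add]
        have h := dvd_add ha hb
        convert h using 1; rfl; ring
      neg_mem' := by
        rintro a ⟨xa, ha⟩
        refine ⟨fun t => (-1) * xa t, ?_⟩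
        rw [dotZ_smul]
        have h := dvd_neg.mpr ha
        convert h using 1; rfl; ring } with hSdef
  have hSmem : ∀ j : ℤ, j ∈ S ↔ ∃ x : Fin 3 → ℤ, D ∣ dotZ (g 0) x - j :=
    fun j => Iff.rfl
  obtain ⟨a, hSa⟩ := Int.subgroup_cyclic S
  have hmem : ∀ j : ℤ, j ∈ S ↔ a ∣ j := by
    intro j
    rw [hSa, AddSubgroup.mem_closure_singleton]
    constructor
    · rintro ⟨t, rfl⟩; exact ⟨t, by rw [zsmul_eq_mul]; push_cast; ring⟩
    · rintro ⟨t, rfl⟩; exact ⟨t, by rw [zsmul_eq_mul]; push_cast; ring⟩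
  by_cases htriv : ∀ x : Fin 3 → ℤ, D ∣ dotZ (g 0) x
  · refine ⟨![1,1,0], Or.inr (Or.inr rfl), ?_⟩
    intro x
    have h0 : dotZ (g 0) x % D = 0 := Int.emod_eq_zero_of_dvd (htriv x)
    have h1 : D ∣ dotZ (g 1) x := Int.dvd_of_emod_eq_zero (key0 x 0 h0 1)
    have hsum3 : ∑ i, (![1,1,0] : Fin 3 → ℤ) i * dotZ (g i) x
        = dotZ (g 0) x + dotZ (g 1) x := by
      rw [Fin.sum_univ_three]
      simp
    rw [hsum3]
    exact dvd_add (htriv x) h1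
  · push_neg at htriv
    obtain ⟨x0, hx0⟩ := htriv
    have hx0S : dotZ (g 0) x0 ∈ S := ⟨x0, by simp⟩
    have ha0 : a ≠ 0 := by
      intro h0
      apply hx0
      have h1 := (hmem _).mp hx0S
      rw [h0] at h1
      rw [zero_dvd_iff.mp h1]
      exact dvd_zero D
    set d := |a| with hd
    have hd0 : 0 < d := abs_pos.mpr ha0
    have hmemd : ∀ j : ℤ, j ∈ S ↔ d ∣ j := fun j => (hmem j).trans (abs_dvd a j).symm
    have hDmem : (D:ℤ) ∈ S := ⟨fun _ => 0, by rw [dotZ_zero, zero_sub]; exact dvd_neg.mpr dvd_rfl⟩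
    have hdD : d ∣ D := (hmemd D).mp hDmem
    obtain ⟨n, hn⟩ := hdD
    have hn0 : 0 < n := by nlinarith
    have hdall : ∀ x : Fin 3 → ℤ, d ∣ dotZ (g 0) x :=
      fun x => (hmemd _).mp ⟨x, by simp⟩
    have hn2 : 2 ≤ n := by
      rcases lt_or_ge n 2 with h | h
      · exfalso
        have hn1 : n = 1 := by omega
        apply hx0
        have h1 := hdall x0
        rw [hn, hn1, mul_one]
        exact h1
      · exact h
    have hdS : d ∈ S := (hmemd d).mpr dvd_rfl
    obtain ⟨xγ, hγ⟩ := (hSmem d).mp hdS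
    obtain ⟨cγ, hcγ⟩ := hγ
    -- dotZ (g 0) xγ = d + D * cγ
    have hG0 : dotZ (g 0) xγ = d + D * cγ := by linarith
    -- representation: every x is congruent to a multiple of xγ
    have hlin : ∀ (x : Fin 3 → ℤ) (k : ℤ) (t : Fin 3),
        dotZ (g t) (fun s => x s - k * xγ s) = dotZ (g t) x - k * dotZ (g t) xγ := by
      intro x k t
      have h2 : (fun s => x s - k * xγ s) = (fun s => x s + k * (-1 * xγ s)) := by
        funext s; ring
      rw [h2]
      have h3 : dotZ (g t) (fun s => x s + k * (-1 * xγ s))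
          = dotZ (g t) x + dotZ (g t) (fun s => k * (-1 * xγ s)) :=
        dotZ_add (g t) x (fun s => k * (-1 * xγ s))
      rw [h3, dotZ_smul, dotZ_smul]
      ring
    have hrep : ∀ (x : Fin 3 → ℤ) (k : ℤ), D ∣ dotZ (g 0) x - k * dotZ (g 0) xγ →
        ∀ j, dotZ (g j) x % D = (k * dotZ (g j) xγ) % D := by
      intro x k hk j
      have h0 : dotZ (g 0) (fun s => x s - k * xγ s) % D = 0 := by
        rw [hlin]; exact Int.emod_eq_zero_of_dvd hk
      have hall := key0 _ 0 h0 j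
      rw [hlin] at hall
      exact (Int.modEq_iff_dvd.mpr (Int.dvd_of_emod_eq_zero hall)).symm
    -- n·xγ is ≡ 0
    have hnG0 : D ∣ n * dotZ (g 0) xγ := by
      refine ⟨1 + n * cγ, ?_⟩
      rw [hG0, hn]; ring
    have hnall : ∀ j, D ∣ n * dotZ (g j) xγ := by
      intro j
      have h0 : dotZ (g 0) (fun s => n * xγ s) % D = 0 := by
        rw [dotZ_smul]; exact Int.emod_eq_zero_of_dvd hnG0
      have h1 := key0 _ 0 h0 j
      rw [dotZ_smul] at h1
      exact Int.dvd_of_emod_eq_zero h1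
    have hdY : d ∣ dotZ (g 1) xγ := by
      obtain ⟨c, hc⟩ := hnall 1
      refine ⟨c, mul_left_cancel₀ (ne_of_gt hn0) ?_⟩
      rw [hc, hn]; ring
    have hdZ : d ∣ dotZ (g 2) xγ := by
      obtain ⟨c, hc⟩ := hnall 2
      refine ⟨c, mul_left_cancel₀ (ne_of_gt hn0) ?_⟩
      rw [hc, hn]; ring
    obtain ⟨Y1, hY1⟩ := hdY
    obtain ⟨Z1, hZ1⟩ := hdZ
    -- mod computations for multiples of xγ
    have hfirst : ∀ k : ℤ, 1 ≤ k → k ≤ n - 1 → (k * dotZ (g 0) xγ) % D = k * d := by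
      intro k h1 h2
      have he : k * dotZ (g 0) xγ = k * d + D * (k * cγ) := by rw [hG0]; ring
      rw [he, Int.add_mul_emod_self_left]
      refine Int.emod_eq_of_lt (by positivity) ?_
      have : k * d ≤ (n-1) * d := mul_le_mul_of_nonneg_right h2 (le_of_lt hd0)
      nlinarith
    have hmodY : ∀ k : ℤ, (k * dotZ (g 1) xγ) % D = d * ((k * Y1) % n) := by
      intro k
      have he : k * dotZ (g 1) xγ = d * (k * Y1) := by rw [hY1]; ring
      rw [he, hn]
      exact Int.mul_emod_mul_of_pos _ _ hd0
    have hmodZ : ∀ k : ℤ, (k * dotZ (g 2) xγ) % D = d * ((k * Z1) % n) := by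
      intro k
      have he : k * dotZ (g 2) xγ = d * (k * Z1) := by rw [hZ1]; ring
      rw [he, hn]
      exact Int.mul_emod_mul_of_pos _ _ hd0
    -- first coordinates of nonzero multiples are nonzero mod D
    have hmulγ : ∀ (k : ℤ) (t : Fin 3),
        dotZ (g t) (fun s => k * xγ s) = k * dotZ (g t) xγ := by
      intro k t; exact dotZ_smul (g t) k xγ
    have hYk : ∀ k : ℤ, 1 ≤ k → k ≤ n - 1 → (k * Y1) % n ≠ 0 := by
      intro k h1 h2 h0
      have hz : dotZ (g 1) (fun s => k * xγ s) % D = 0 := by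
        rw [hmulγ, hmodY, h0, mul_zero]
      have := key0 _ 1 hz 0
      rw [hmulγ, hfirst k h1 h2] at this
      nlinarith
    have hZk : ∀ k : ℤ, 1 ≤ k → k ≤ n - 1 → (k * Z1) % n ≠ 0 := by
      intro k h1 h2 h0
      have hz : dotZ (g 2) (fun s => k * xγ s) % D = 0 := by
        rw [hmulγ, hmodZ, h0, mul_zero]
      have := key0 _ 2 hz 0
      rw [hmulγ, hfirst k h1 h2] at this
      nlinarith
    -- the emptiness inequality in reduced form
    have hlow : ∀ k : ℤ, 1 ≤ k → k ≤ n - 1 →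
        n + 1 ≤ k + (k * Y1) % n + (k * Z1) % n := by
      intro k h1 h2
      by_contra hS
      push_neg at hS
      have hsum3 : ∑ t, dotZ (g t) (fun s => k * xγ s) % D
          = k * d + d * ((k * Y1) % n) + d * ((k * Z1) % n) := by
        rw [Fin.sum_univ_three, hmulγ, hmulγ, hmulγ, hfirst k h1 h2, hmodY, hmodZ]
      have hle : ∑ t, dotZ (g t) (fun s => k * xγ s) % D ≤ D := by
        rw [hsum3, hn]
        have hkk : k + (k * Y1) % n + (k * Z1) % n ≤ n := by linarith
        nlinarith
      have h0 := hE _ hle 0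
      rw [hmulγ, hfirst k h1 h2] at h0
      nlinarith
    -- upper bound via pairing k ↦ n - k
    have hmodnnn : ∀ m : ℤ, 0 ≤ m % n := fun m => Int.emod_nonneg m (ne_of_gt hn0)
    have hmodltn : ∀ m : ℤ, m % n < n := fun m => Int.emod_lt_of_pos m hn0
    have hpairmod : ∀ (w k : ℤ), 1 ≤ k → k ≤ n - 1 → (k * w) % n ≠ 0 →
        ((n - k) * w) % n ≠ 0 → (k * w) % n + ((n - k) * w) % n = n := by
      intro w k h1 h2 hk hnk
      have hdvd : n ∣ (k * w) % n + ((n - k) * w) % n := by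
        have h3 : ((k * w) % n + ((n - k) * w) % n) % n = (k * w + (n - k) * w) % n := by
          rw [Int.add_emod ((k*w) % n), Int.emod_emod_of_dvd _ dvd_rfl,
            Int.emod_emod_of_dvd _ dvd_rfl, ← Int.add_emod]
        have h4 : (k * w + (n - k) * w) % n = 0 := by
          have : k * w + (n - k) * w = w * n := by ring
          rw [this, Int.mul_emod_left]
        exact Int.dvd_of_emod_eq_zero (by rw [h3, h4])
      obtain ⟨c, hc⟩ := hdvd
      have hb1 : 0 < (k * w) % n := lt_of_le_of_ne (hmodnnn _) (Ne.symm hk)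
      have hb2 : 0 < ((n - k) * w) % n := lt_of_le_of_ne (hmodnnn _) (Ne.symm hnk)
      have hb3 := hmodltn (k * w)
      have hb4 := hmodltn ((n - k) * w)
      have : c = 1 := by nlinarith
      rw [hc, this]; ring
    have hupp : ∀ k : ℤ, 1 ≤ k → k ≤ n - 1 →
        k + (k * Y1) % n + (k * Z1) % n ≤ 2 * n - 1 := by
      intro k h1 h2
      have r1 : 1 ≤ n - k := by linarith
      have r2 : n - k ≤ n - 1 := by linarith
      have hY := hpairmod Y1 k h1 h2 (hYk k h1 h2) (hYk (n-k) r1 r2)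
      have hZ := hpairmod Z1 k h1 h2 (hZk k h1 h2) (hZk (n-k) r1 r2)
      have := hlow (n - k) r1 r2
      linarith
    -- gcd facts
    have hgY : Int.gcd Y1 n = 1 := by
      by_contra hg
      set e : ℤ := (Int.gcd Y1 n : ℤ) with hedef
      have he1 : e ∣ Y1 := Int.gcd_dvd_left _ _
      have he2 : e ∣ n := Int.gcd_dvd_right _ _
      have he3 : 2 ≤ e := gcd_two Y1 n (by linarith) hg
      have he0 : 0 < e := by linarith
      obtain ⟨k, hk⟩ := he2
      obtain ⟨y, hy⟩ := he1
      have hk1 : 1 ≤ k := by nlinarith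
      have hk2 : k ≤ n - 1 := by nlinarith
      apply hYk k hk1 hk2
      have : k * Y1 = n * y := by rw [hy, hk]; ring
      rw [this, Int.mul_emod_right]
    have hgZ : Int.gcd Z1 n = 1 := by
      by_contra hg
      set e : ℤ := (Int.gcd Z1 n : ℤ) with hedef
      have he1 : e ∣ Z1 := Int.gcd_dvd_left _ _
      have he2 : e ∣ n := Int.gcd_dvd_right _ _
      have he3 : 2 ≤ e := gcd_two Z1 n (by linarith) hg
      have he0 : 0 < e := by linarith
      obtain ⟨k, hk⟩ := he2
      obtain ⟨z, hz⟩ := he1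
      have hk1 : 1 ≤ k := by nlinarith
      have hk2 : k ≤ n - 1 := by nlinarith
      apply hZk k hk1 hk2
      have : k * Z1 = n * z := by rw [hz, hk]; ring
      rw [this, Int.mul_emod_right]
    -- s and its inverse
    set s : ℤ := 1 + Y1 + Z1 with hsdef
    have hks : ∀ k : ℤ, 1 ≤ k → k ≤ n - 1 →
        (k * s) % n = k + (k * Y1) % n + (k * Z1) % n - n := by
      intro k h1 h2
      have m1 : (k + (k * Y1) % n + (k * Z1) % n) % n = (k * s) % n := by
        have hh : k + (k * Y1) % n + (k * Z1) % n
            = k * s + n * (-(k*Y1/n) - (k*Z1/n)) := by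
          rw [Int.emod_def, Int.emod_def, hsdef]; ring
        rw [hh, Int.add_mul_emod_self_left]
      rw [← m1]
      have heq := emod_eq_sub' (k + (k * Y1) % n + (k * Z1) % n) 1 n
        (by have := hlow k h1 h2; linarith) (by have := hupp k h1 h2; linarith)
      linarith [heq]
    have hgs : Int.gcd s n = 1 := by
      by_contra hg
      set e : ℤ := (Int.gcd s n : ℤ) with hedef
      have he1 : e ∣ s := Int.gcd_dvd_left _ _
      have he2 : e ∣ n := Int.gcd_dvd_right _ _
      have he3 : 2 ≤ e := gcd_two s n (by linarith) hg
      have he0 : 0 < e := by linarith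
      obtain ⟨k, hk⟩ := he2
      obtain ⟨ss, hss⟩ := he1
      have hk1 : 1 ≤ k := by nlinarith
      have hk2 : k ≤ n - 1 := by nlinarith
      have h0 : (k * s) % n = 0 := by
        have : k * s = n * ss := by rw [hss, hk]; ring
        rw [this, Int.mul_emod_right]
      have := hks k hk1 hk2
      rw [h0] at this
      have := hlow k hk1 hk2
      linarith
    obtain ⟨t, ht1, ht2, hgt, htinv⟩ := exists_inv s n hn2 hgs
    obtain ⟨cc, hcc⟩ := htinv
    -- assemble lemX inputs
    have hBne : (t * Y1) % n ≠ 0 := hYk t ht1 ht2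
    have hCne : (t * Z1) % n ≠ 0 := hZk t ht1 ht2
    have hB1 : 1 ≤ (t * Y1) % n := lt_of_le_of_ne (hmodnnn _) (Ne.symm hBne)
    have hB2 : (t * Y1) % n ≤ n - 1 := by have := hmodltn (t * Y1); linarith
    have hC1 : 1 ≤ (t * Z1) % n := lt_of_le_of_ne (hmodnnn _) (Ne.symm hCne)
    have hC2 : (t * Z1) % n ≤ n - 1 := by have := hmodltn (t * Z1); linarith
    have ct : IsCoprime t n := Int.isCoprime_iff_gcd_eq_one.mpr hgt
    have cY : IsCoprime Y1 n := Int.isCoprime_iff_gcd_eq_one.mpr hgY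
    have cZ : IsCoprime Z1 n := Int.isCoprime_iff_gcd_eq_one.mpr hgZ
    have hgB : Int.gcd ((t * Y1) % n) n = 1 := by
      have ctY : IsCoprime (t * Y1) n := IsCoprime.mul_left ct cY
      have hBeq : (t * Y1) % n = t * Y1 + n * (-(t * Y1 / n)) := by
        rw [Int.emod_def]; ring
      rw [hBeq]
      exact Int.isCoprime_iff_gcd_eq_one.mp (ctY.add_mul_left_left _)
    have hgC : Int.gcd ((t * Z1) % n) n = 1 := by
      have ctZ : IsCoprime (t * Z1) n := IsCoprime.mul_left ct cZ
      have hCeq : (t * Z1) % n = t * Z1 + n * (-(t * Z1 / n)) := by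
        rw [Int.emod_def]; ring
      rw [hCeq]
      exact Int.isCoprime_iff_gcd_eq_one.mp (ctZ.add_mul_left_left _)
    have Hlem : ∀ k, 1 ≤ k → k ≤ n - 1 →
        (k * t) % n + (k * ((t * Y1) % n)) % n + (k * ((t * Z1) % n)) % n = n + k := by
      intro k hk1 hk2
      have hjne : (k * t) % n ≠ 0 := by
        intro h0
        have hdvd : n ∣ k * t := Int.dvd_of_emod_eq_zero h0
        have hnk : n ∣ k := (ct.symm).dvd_of_dvd_mul_right hdvd
        have := Int.le_of_dvd (by linarith) hnk
        linarith
      have hj1 : 1 ≤ (k * t) % n := lt_of_le_of_ne (hmodnnn _) (Ne.symm hjne)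
      have hj2 : (k * t) % n ≤ n - 1 := by have := hmodltn (k * t); linarith
      have eB : (k * ((t * Y1) % n)) % n = (((k * t) % n) * Y1) % n := by
        have e1 : k * ((t * Y1) % n) = k * (t * Y1) + n * (-(k * (t * Y1 / n))) := by
          rw [Int.emod_def]; ring
        have e2 : ((k * t) % n) * Y1 = k * (t * Y1) + n * (-(Y1 * (k * t / n))) := by
          rw [Int.emod_def]; ring
        rw [e1, e2, Int.add_mul_emod_self_left, Int.add_mul_emod_self_left]
      have eC : (k * ((t * Z1) % n)) % n = (((k * t) % n) * Z1) % n := by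
        have e1 : k * ((t * Z1) % n) = k * (t * Z1) + n * (-(k * (t * Z1 / n))) := by
          rw [Int.emod_def]; ring
        have e2 : ((k * t) % n) * Z1 = k * (t * Z1) + n * (-(Z1 * (k * t / n))) := by
          rw [Int.emod_def]; ring
        rw [e1, e2, Int.add_mul_emod_self_left, Int.add_mul_emod_self_left]
      have ejs : (((k * t) % n) * s) % n = k := by
        have e1 : ((k * t) % n) * s = k * (t * s) + n * (-(s * (k * t / n))) := by
          rw [Int.emod_def]; ring
        have e2 : ((k * t) % n) * s = k + n * (k * cc - s * (k * t / n)) := by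
          rw [e1]
          have e3 : t * s = 1 + n * cc := by linarith
          rw [e3]; ring
        rw [e2, Int.add_mul_emod_self_left]
        exact Int.emod_eq_of_lt (by linarith) (by linarith)
      have hkj := hks ((k * t) % n) hj1 hj2
      rw [ejs] at hkj
      rw [eB, eC]
      linarith
    have hconc := lemX n t ((t * Y1) % n) ((t * Z1) % n) hn2 ht1 ht2 hB1 hB2 hC1 hC2
      hgt hgB hgC Hlem
    -- common final step
    have hpairdvd : ∀ (i1 i2 : Fin 3), D ∣ dotZ (g i1) xγ + dotZ (g i2) xγ →
        ∀ x : Fin 3 → ℤ, D ∣ (dotZ (g i1) x + dotZ (g i2) x) := by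
      intro i1 i2 hpd x
      obtain ⟨k, hk⟩ := hdall x
      have hfirstc : D ∣ dotZ (g 0) x - k * dotZ (g 0) xγ := by
        rw [hk, hG0]
        exact ⟨-(k * cγ), by ring⟩
      have h1 := hrep x k hfirstc i1
      have h2 := hrep x k hfirstc i2
      have d1 : D ∣ k * dotZ (g i1) xγ - dotZ (g i1) x :=
        Int.ModEq.dvd (show Int.ModEq D _ _ from h1)
      have d2 : D ∣ k * dotZ (g i2) xγ - dotZ (g i2) x :=
        Int.ModEq.dvd (show Int.ModEq D _ _ from h2)
      have hsum : dotZ (g i1) x + dotZ (g i2) x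
          = -((k * dotZ (g i1) xγ - dotZ (g i1) x)
              + (k * dotZ (g i2) xγ - dotZ (g i2) x))
            + k * (dotZ (g i1) xγ + dotZ (g i2) xγ) := by ring
      rw [hsum]
      exact dvd_add (dvd_neg.mpr (dvd_add d1 d2)) (Dvd.dvd.mul_left hpd k)
    rcases hconc with h1 | h1 | h1
    · -- t = 1 : n ∣ Y1 + Z1, use u = ![0,1,1]
      have hnYZ : n ∣ Y1 + Z1 := by
        refine ⟨cc, ?_⟩
        have : t * s = 1 + n * cc := by linarith
        rw [h1, one_mul, hsdef] at this
        linarith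
      obtain ⟨m, hm⟩ := hnYZ
      have hD12 : D ∣ dotZ (g 1) xγ + dotZ (g 2) xγ := by
        refine ⟨m, ?_⟩
        rw [hY1, hZ1, hn]
        linear_combination d * hm
      refine ⟨![0,1,1], Or.inl rfl, ?_⟩
      intro x
      have hdd := hpairdvd 1 2 hD12 x
      have hsum3 : ∑ i, (![0,1,1] : Fin 3 → ℤ) i * dotZ (g i) x
          = dotZ (g 1) x + dotZ (g 2) x := by
        rw [Fin.sum_univ_three]; simp
      rw [hsum3]; exact hdd
    · -- (t*Y1)%n = 1 : n ∣ 1 + Z1, use u = ![1,0,1]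
      have hdvd1 : n ∣ t * Y1 - 1 := by
        refine ⟨t * Y1 / n, ?_⟩
        have := Int.emod_def (t * Y1) n
        rw [h1] at this
        linarith
      have hnZ : n ∣ 1 + Z1 := by
        have hdvd2 : n ∣ t * (1 + Z1) := by
          obtain ⟨m1, hm1⟩ := hdvd1
          refine ⟨cc - m1, ?_⟩
          have e3 : t * s = 1 + n * cc := by linarith
          rw [hsdef] at e3
          linarith
        exact (ct.symm).dvd_of_dvd_mul_left hdvd2
      obtain ⟨m, hm⟩ := hnZ
      have hD02 : D ∣ dotZ (g 0) xγ + dotZ (g 2) xγ := by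
        refine ⟨m + cγ, ?_⟩
        rw [hG0, hZ1, hn]
        linear_combination d * hm
      refine ⟨![1,0,1], Or.inr (Or.inl rfl), ?_⟩
      intro x
      have hdd := hpairdvd 0 2 hD02 x
      have hsum3 : ∑ i, (![1,0,1] : Fin 3 → ℤ) i * dotZ (g i) x
          = dotZ (g 0) x + dotZ (g 2) x := by
        rw [Fin.sum_univ_three]; simp
      rw [hsum3]; exact hdd
    · -- (t*Z1)%n = 1 : n ∣ 1 + Y1, use u = ![1,1,0]
      have hdvd1 : n ∣ t * Z1 - 1 := by
        refine ⟨t * Z1 / n, ?_⟩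
        have := Int.emod_def (t * Z1) n
        rw [h1] at this
        linarith
      have hnY : n ∣ 1 + Y1 := by
        have hdvd2 : n ∣ t * (1 + Y1) := by
          obtain ⟨m1, hm1⟩ := hdvd1
          refine ⟨cc - m1, ?_⟩
          have e3 : t * s = 1 + n * cc := by linarith
          rw [hsdef] at e3
          linarith
        exact (ct.symm).dvd_of_dvd_mul_left hdvd2
      obtain ⟨m, hm⟩ := hnY
      have hD01 : D ∣ dotZ (g 0) xγ + dotZ (g 1) xγ := by
        refine ⟨m + cγ, ?_⟩
        rw [hG0, hY1, hn]
        linear_combination d * hm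
      refine ⟨![1,1,0], Or.inr (Or.inr rfl), ?_⟩
      intro x
      have hdd := hpairdvd 0 1 hD01 x
      have hsum3 : ∑ i, (![1,1,0] : Fin 3 → ℤ) i * dotZ (g i) x
          = dotZ (g 0) x + dotZ (g 1) x := by
        rw [Fin.sum_univ_three]; simp
      rw [hsum3]; exact hdd




private def cross (a b : Fin 3 → ℤ) : Fin 3 → ℤ :=
  ![a 1 * b 2 - a 2 * b 1, a 2 * b 0 - a 0 * b 2, a 0 * b 1 - a 1 * b 0]

private lemma cross_dot_self_left (a b : Fin 3 → ℤ) : dotZ (cross a b) a = 0 := by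
  simp [dotZ, cross, Fin.sum_univ_three]; ring

private lemma cross_dot_self_right (a b : Fin 3 → ℤ) : dotZ (cross a b) b = 0 := by
  simp [dotZ, cross, Fin.sum_univ_three]; ring

private lemma triple_cyclic (a b c : Fin 3 → ℤ) :
    dotZ (cross a b) c = dotZ (cross b c) a := by
  simp [dotZ, cross, Fin.sum_univ_three]; ring

private lemma adjugate_id (a b c x : Fin 3 → ℤ) (i : Fin 3) :
    (dotZ (cross b c) x) * a i + (dotZ (cross c a) x) * b i
      + (dotZ (cross a b) x) * c i = (dotZ (cross b c) a) * x i := by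
  fin_cases i <;>
    · simp [dotZ, cross, Fin.sum_univ_three]
      ring

/-- White's theorem: every empty lattice tetrahedron has lattice width one,
i.e., some non-constant integer affine functional takes exactly the two
consecutive values c and c+1 on its vertices. -/
theorem empty_tetrahedron_width_one (v : Fin 4 → Fin 3 → ℤ)
    (hindep : AffineIndependent ℝ fun k => toR (v k))
    (hempty : ∀ z : Fin 3 → ℤ,
      toR z ∈ convexHull ℝ (toR '' Set.range v) → z ∈ Set.range v) :
    ∃ (f : Fin 3 → ℤ) (c : ℤ), f ≠ 0 ∧
      (∀ k, dotZ f (v k) = c ∨ dotZ f (v k) = c + 1) ∧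
      (∃ k, dotZ f (v k) = c) ∧ (∃ k, dotZ f (v k) = c + 1) := by
  classical
  set w : Fin 3 → Fin 3 → ℤ := fun j i => v j.succ i - v 0 i with hw
  set Ddet : ℤ := dotZ (cross (w 1) (w 2)) (w 0) with hDdet
  -- linear independence of the w's over ℝ
  have hli : LinearIndependent ℝ (fun j : Fin 3 => toR (w j)) := by
    have h1 := (affineIndependent_iff_linearIndependent_vsub ℝ
      (fun k => toR (v k)) 0).mp hindep
    have hinj : Function.Injective
        (fun j : Fin 3 => (⟨j.succ, Fin.succ_ne_zero j⟩ : {x : Fin 4 // x ≠ 0})) := by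
      intro a b hab
      simpa [Fin.succ_inj] using Subtype.mk_eq_mk.mp hab
    have h2 := h1.comp _ hinj
    convert h2 using 1
    funext j
    funext i
    show ((v j.succ i - v 0 i : ℤ) : ℝ) = _
    push_cast
    simp [toR]
    all_goals rfl
  -- nonzero determinant
  have hD0 : Ddet ≠ 0 := by
    intro h0
    set M : Matrix (Fin 3) (Fin 3) ℝ := Matrix.of (fun i j => toR (w j) i) with hM
    have hdet : M.det = 0 := by
      rw [Matrix.det_fin_three]
      have : (Ddet : ℝ) = 0 := by exact_mod_cast congrArg (Int.cast : ℤ → ℝ) h0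
      rw [hDdet] at this
      simp [dotZ, cross, Fin.sum_univ_three] at this
      push_cast at this
      simp only [hM, Matrix.of_apply, toR]
      push_cast
      linarith [this]
    obtain ⟨cvec, hc0, hcv⟩ := Matrix.exists_mulVec_eq_zero_iff.mpr hdet
    have hzero : ∑ j, cvec j • toR (w j) = 0 := by
      funext i
      have h1 := congrFun hcv i
      simp only [Matrix.mulVec, dotProduct, hM, Matrix.of_apply,
        Pi.zero_apply] at h1
      simp only [Finset.sum_apply, Pi.smul_apply, smul_eq_mul, Pi.zero_apply]
      rw [Fin.sum_univ_three] at h1 ⊢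
      linarith [h1]
    have hall := Fintype.linearIndependent_iff.mp hli cvec hzero
    exact hc0 (by funext j; exact hall j)
  -- sign normalization
  set ee : ℤ := if 0 < Ddet then 1 else -1 with hee
  set D : ℤ := ee * Ddet with hDD
  have hD : 0 < D := by
    rcases lt_trichotomy Ddet 0 with h | h | h
    · rw [hDD, hee, if_neg (by linarith)]; linarith
    · exact absurd h hD0
    · rw [hDD, hee, if_pos h]; linarith
  set gv : Fin 3 → Fin 3 → ℤ :=
    ![fun i => ee * cross (w 1) (w 2) i,
      fun i => ee * cross (w 2) (w 0) i,
      fun i => ee * cross (w 0) (w 1) i] with hgv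
  have hgv0 : gv 0 = fun i => ee * cross (w 1) (w 2) i := rfl
  have hgv1 : gv 1 = fun i => ee * cross (w 2) (w 0) i := rfl
  have hgv2 : gv 2 = fun i => ee * cross (w 0) (w 1) i := rfl
  have hsm : ∀ (cc : Fin 3 → ℤ) (x : Fin 3 → ℤ),
      dotZ (fun i => ee * cc i) x = ee * dotZ cc x := by
    intro cc x
    simp [dotZ, Finset.mul_sum]
    apply Finset.sum_congr rfl; intros; ring
  have hcyc2 : dotZ (cross (w 2) (w 0)) (w 1) = Ddet := by
    rw [triple_cyclic, triple_cyclic]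
  have hcyc3 : dotZ (cross (w 0) (w 1)) (w 2) = Ddet := by
    rw [triple_cyclic]
  have hgw00 : dotZ (gv 0) (w 0) = D := by
    rw [hgv0, hsm, ← hDdet]
  have hgw01 : dotZ (gv 0) (w 1) = 0 := by
    rw [hgv0, hsm, cross_dot_self_left]; ring
  have hgw02 : dotZ (gv 0) (w 2) = 0 := by
    rw [hgv0, hsm, cross_dot_self_right]; ring
  have hgw10 : dotZ (gv 1) (w 0) = 0 := by
    rw [hgv1, hsm, cross_dot_self_right]; ring
  have hgw11 : dotZ (gv 1) (w 1) = D := by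
    rw [hgv1, hsm, hcyc2]
  have hgw12 : dotZ (gv 1) (w 2) = 0 := by
    rw [hgv1, hsm, cross_dot_self_left]; ring
  have hgw20 : dotZ (gv 2) (w 0) = 0 := by
    rw [hgv2, hsm, cross_dot_self_left]; ring
  have hgw21 : dotZ (gv 2) (w 1) = 0 := by
    rw [hgv2, hsm, cross_dot_self_right]; ring
  have hgw22 : dotZ (gv 2) (w 2) = D := by
    rw [hgv2, hsm, hcyc3]
  -- bridging: vertices in terms of w
  have hv1 : ∀ i, v 1 i = v 0 i + w 0 i := by
    intro i
    have : (Fin.succ (0 : Fin 3)) = (1 : Fin 4) := by decide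
    simp [hw, this]
  have hv2 : ∀ i, v 2 i = v 0 i + w 1 i := by
    intro i
    have : (Fin.succ (1 : Fin 3)) = (2 : Fin 4) := by decide
    simp [hw, this]
  have hv3 : ∀ i, v 3 i = v 0 i + w 2 i := by
    intro i
    have : (Fin.succ (2 : Fin 3)) = (3 : Fin 4) := by decide
    simp [hw, this]
  -- the emptiness condition in arithmetic form
  have hE : ∀ x : Fin 3 → ℤ, (∑ i, dotZ (gv i) x % D) ≤ D →
      ∀ i, dotZ (gv i) x % D = 0 := by
    intro x hx
    set p : Fin 3 → ℤ := fun t => dotZ (gv t) x % D with hp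
    set q : Fin 3 → ℤ := fun t => dotZ (gv t) x / D with hq
    have hpq : ∀ t, dotZ (gv t) x = p t + D * q t := by
      intro t
      have := Int.emod_add_mul_ediv (dotZ (gv t) x) D
      rw [hp, hq]
      linarith
    have hpnn : ∀ t, 0 ≤ p t := fun t => Int.emod_nonneg _ (ne_of_gt hD)
    have hplt : ∀ t, p t < D := fun t => Int.emod_lt_of_pos _ hD
    set yv : Fin 3 → ℤ := fun i => x i - q 0 * w 0 i - q 1 * w 1 i - q 2 * w 2 i
      with hyv
    have e1 : ∀ t, dotZ (gv t) yv = dotZ (gv t) x - q 0 * dotZ (gv t) (w 0)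
        - q 1 * dotZ (gv t) (w 1) - q 2 * dotZ (gv t) (w 2) := by
      intro t
      rw [hyv]
      rw [dotZ_sub (gv t) (fun i => x i - q 0 * w 0 i - q 1 * w 1 i)
          (fun i => q 2 * w 2 i),
        dotZ_sub (gv t) (fun i => x i - q 0 * w 0 i) (fun i => q 1 * w 1 i),
        dotZ_sub (gv t) x (fun i => q 0 * w 0 i),
        dotZ_smul (gv t) (q 0) (w 0), dotZ_smul (gv t) (q 1) (w 1),
        dotZ_smul (gv t) (q 2) (w 2)]
    have hduy0 : dotZ (gv 0) yv = p 0 := by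
      rw [e1 0, hgw00, hgw01, hgw02]
      have := hpq 0; linarith
    have hduy1 : dotZ (gv 1) yv = p 1 := by
      rw [e1 1, hgw10, hgw11, hgw12]
      have := hpq 1; linarith
    have hduy2 : dotZ (gv 2) yv = p 2 := by
      rw [e1 2, hgw20, hgw21, hgw22]
      have := hpq 2; linarith
    have hduy : ∀ t, dotZ (gv t) yv = p t := by
      intro t
      fin_cases t
      exacts [hduy0, hduy1, hduy2]
    set z' : Fin 3 → ℤ := fun i => v 0 i + yv i with hz'
    have hkey : ∀ i, p 0 * w 0 i + p 1 * w 1 i + p 2 * w 2 i = D * yv i := by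
      intro i
      have ha := adjugate_id (w 0) (w 1) (w 2) yv i
      rw [← hDdet] at ha
      have e0 : p 0 = ee * dotZ (cross (w 1) (w 2)) yv := by
        rw [← hduy 0, hgv0, hsm]
      have e1 : p 1 = ee * dotZ (cross (w 2) (w 0)) yv := by
        rw [← hduy 1, hgv1, hsm]
      have e2 : p 2 = ee * dotZ (cross (w 0) (w 1)) yv := by
        rw [← hduy 2, hgv2, hsm]
      rw [e0, e1, e2, hDD]
      linear_combination ee * (w 0 i) * 0 + ee * ha
    have hhull : toR z' ∈ convexHull ℝ (toR '' Set.range v) := by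
      set μw : Fin 4 → ℝ := ![1 - ((p 0 : ℝ) + p 1 + p 2)/D,
        (p 0 : ℝ)/D, (p 1 : ℝ)/D, (p 2 : ℝ)/D] with hμw
      have hDR : (0:ℝ) < (D:ℝ) := by exact_mod_cast hD
      have hxR : (p 0 : ℝ) + p 1 + p 2 ≤ (D : ℝ) := by
        have hxx : p 0 + p 1 + p 2 ≤ D := by
          have := hx
          rw [Fin.sum_univ_three] at this
          exact this
        exact_mod_cast hxx
      have hnnμ : ∀ k ∈ Finset.univ, 0 ≤ μw k := by
        intro k _
        fin_cases k
        · show (0:ℝ) ≤ μw 0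
          have he : μw 0 = 1 - ((p 0 : ℝ) + p 1 + p 2)/D := by rw [hμw]; rfl
          rw [he, sub_nonneg, div_le_one hDR]
          exact hxR
        · show (0:ℝ) ≤ μw 1
          have he : μw 1 = (p 0 : ℝ)/D := by rw [hμw]; rfl
          rw [he]
          exact div_nonneg (by exact_mod_cast hpnn 0) (le_of_lt hDR)
        · show (0:ℝ) ≤ μw 2
          have he : μw 2 = (p 1 : ℝ)/D := by rw [hμw]; rfl
          rw [he]
          exact div_nonneg (by exact_mod_cast hpnn 1) (le_of_lt hDR)
        · show (0:ℝ) ≤ μw 3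
          have he : μw 3 = (p 2 : ℝ)/D := by rw [hμw]; rfl
          rw [he]
          exact div_nonneg (by exact_mod_cast hpnn 2) (le_of_lt hDR)
      have hsum1 : ∑ k, μw k = 1 := by
        rw [Fin.sum_univ_four]
        simp only [hμw, Matrix.cons_val_zero, Matrix.cons_val_one,
          Matrix.head_cons, Matrix.cons_val_two, Matrix.tail_cons, Matrix.cons_val_three]
        norm_num
        ring
      have hcm := Finset.centerMass_mem_convexHull (Finset.univ (α := Fin 4))
        (w := μw) (z := fun k => toR (v k)) (s := toR '' Set.range v) hnnμ
        (by rw [hsum1]; norm_num)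
        (fun k _ => Set.mem_image_of_mem toR (Set.mem_range_self k))
      have hcm_eq : Finset.univ.centerMass μw (fun k => toR (v k)) = toR z' := by
        rw [Finset.centerMass_eq_of_sum_1 _ _ hsum1]
        funext i
        rw [Fin.sum_univ_four]
        simp only [Pi.add_apply, Pi.smul_apply, smul_eq_mul]
        have he0 : μw 0 = 1 - ((p 0 : ℝ) + p 1 + p 2)/D := by rw [hμw]; rfl
        have he1 : μw 1 = (p 0 : ℝ)/D := by rw [hμw]; rfl
        have he2 : μw 2 = (p 1 : ℝ)/D := by rw [hμw]; rfl
        have he3 : μw 3 = (p 2 : ℝ)/D := by rw [hμw]; rfl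
        
        have hkR : (p 0 : ℝ) * (w 0 i : ℝ) + (p 1 : ℝ) * (w 1 i : ℝ)
            + (p 2 : ℝ) * (w 2 i : ℝ) = (D:ℝ) * (yv i : ℝ) := by
          exact_mod_cast congrArg (fun m : ℤ => (m : ℝ)) (hkey i)
        have hz'R : (toR z') i = (v 0 i : ℝ) + (yv i : ℝ) := by
          rw [hz']
          simp [toR]
        have ht1 : (toR (v 1)) i = (v 0 i : ℝ) + (w 0 i : ℝ) := by
          simp [toR]
          exact_mod_cast congrArg (fun m : ℤ => (m : ℝ)) (hv1 i)
        have ht2 : (toR (v 2)) i = (v 0 i : ℝ) + (w 1 i : ℝ) := by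
          simp [toR]
          exact_mod_cast congrArg (fun m : ℤ => (m : ℝ)) (hv2 i)
        have ht3 : (toR (v 3)) i = (v 0 i : ℝ) + (w 2 i : ℝ) := by
          simp [toR]
          exact_mod_cast congrArg (fun m : ℤ => (m : ℝ)) (hv3 i)
        have ht0 : (toR (v 0)) i = (v 0 i : ℝ) := rfl
        rw [he0, he1, he2, he3, ht0, ht1, ht2, ht3, hz'R]
        have hDne : (D:ℝ) ≠ 0 := ne_of_gt hDR
        field_simp
        linear_combination hkR
      rw [← hcm_eq]
      exact hcm
    have hzin := hempty z' hhull
    obtain ⟨k0, hk0⟩ := hzin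
    -- yv = v k0 - v 0
    have hyvk : ∀ i, yv i = v k0 i - v 0 i := by
      intro i
      have := congrFun hk0 i
      rw [hz'] at this
      simp at this
      linarith [this]
    intro t
    show p t = 0
    rw [← hduy t]
    fin_cases k0
    · -- z' = v 0 : yv = 0
      have hyvk' : ∀ i, yv i = v 0 i - v 0 i := hyvk
      have hy0 : yv = fun _ => 0 := by
        funext i
        rw [hyvk' i]
        simp
      rw [hy0]
      simp [dotZ]
    · -- yv = w 0 : p 0 = D contradiction
      exfalso
      have hyvk' : ∀ i, yv i = v 1 i - v 0 i := hyvk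
      have hyw : yv = w 0 := by
        funext i
        rw [hyvk' i]
        linarith [hv1 i]
      have hh := hduy 0
      rw [hyw, hgw00] at hh
      have := hplt 0
      omega
    · exfalso
      have hyvk' : ∀ i, yv i = v 2 i - v 0 i := hyvk
      have hyw : yv = w 1 := by
        funext i
        rw [hyvk' i]
        linarith [hv2 i]
      have hh := hduy 1
      rw [hyw, hgw11] at hh
      have := hplt 1
      omega
    · exfalso
      have hyvk' : ∀ i, yv i = v 3 i - v 0 i := hyvk
      have hyw : yv = w 2 := by
        funext i
        rw [hyvk' i]
        linarith [hv3 i]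
      have hh := hduy 2
      rw [hyw, hgw22] at hh
      have := hplt 2
      omega
  obtain ⟨u, hukind, hu⟩ := exists_u D hD gv hE
  have hstd : ∀ j : Fin 3, ∃ ej : Fin 3 → ℤ, ∀ a : Fin 3 → ℤ, dotZ a ej = a j := by
    intro j
    refine ⟨fun i => if i = j then 1 else 0, ?_⟩
    intro a
    fin_cases j <;> simp [dotZ, Fin.sum_univ_three]
  have hdiv : ∀ j : Fin 3, D ∣ (u 0 * gv 0 j + u 1 * gv 1 j + u 2 * gv 2 j) := by
    intro j
    obtain ⟨ej, hej⟩ := hstd j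
    have h := hu ej
    rw [Fin.sum_univ_three] at h
    rw [hej (gv 0), hej (gv 1), hej (gv 2)] at h
    exact h
  set fv : Fin 3 → ℤ := fun j => (u 0 * gv 0 j + u 1 * gv 1 j + u 2 * gv 2 j) / D
    with hfv
  have hfD : ∀ j, D * fv j = u 0 * gv 0 j + u 1 * gv 1 j + u 2 * gv 2 j := by
    intro j
    rw [hfv]
    exact Int.mul_ediv_cancel' (hdiv j)
  have hdotf : ∀ y : Fin 3 → ℤ, D * dotZ fv y
      = u 0 * dotZ (gv 0) y + u 1 * dotZ (gv 1) y + u 2 * dotZ (gv 2) y := by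
    intro y
    have h0 := hfD 0
    have h1 := hfD 1
    have h2 := hfD 2
    simp only [dotZ, Fin.sum_univ_three]
    linear_combination y 0 * h0 + y 1 * h1 + y 2 * h2
  have hfw0 : dotZ fv (w 0) = u 0 := by
    have h := hdotf (w 0)
    rw [hgw00, hgw10, hgw20] at h
    refine mul_left_cancel₀ (ne_of_gt hD) ?_
    linarith
  have hfw1 : dotZ fv (w 1) = u 1 := by
    have h := hdotf (w 1)
    rw [hgw01, hgw11, hgw21] at h
    refine mul_left_cancel₀ (ne_of_gt hD) ?_
    linarith
  have hfw2 : dotZ fv (w 2) = u 2 := by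
    have h := hdotf (w 2)
    rw [hgw02, hgw12, hgw22] at h
    refine mul_left_cancel₀ (ne_of_gt hD) ?_
    linarith
  set c0 : ℤ := dotZ fv (v 0) with hc0
  have hval : ∀ j : Fin 3, dotZ fv (v j.succ) = c0 + dotZ fv (w j) := by
    intro j
    have hadd := dotZ_add fv (v 0) (w j)
    have hvw : v j.succ = fun i => v 0 i + w j i := by
      funext i
      show v j.succ i = v 0 i + (v j.succ i - v 0 i)
      ring
    rw [hvw, hadd, hc0]
  have hval1 : dotZ fv (v 1) = c0 + u 0 := by
    have h := hval 0
    rw [show (Fin.succ (0 : Fin 3)) = (1 : Fin 4) from by decide, hfw0] at h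
    exact h
  have hval2 : dotZ fv (v 2) = c0 + u 1 := by
    have h := hval 1
    rw [show (Fin.succ (1 : Fin 3)) = (2 : Fin 4) from by decide, hfw1] at h
    exact h
  have hval3 : dotZ fv (v 3) = c0 + u 2 := by
    have h := hval 2
    rw [show (Fin.succ (2 : Fin 3)) = (3 : Fin 4) from by decide, hfw2] at h
    exact h
  have hu0 : u 0 = 0 ∨ u 0 = 1 := by
    rcases hukind with h | h | h <;> rw [h] <;> simp
  have hu1 : u 1 = 0 ∨ u 1 = 1 := by
    rcases hukind with h | h | h <;> rw [h] <;> simp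
  have hu2 : u 2 = 0 ∨ u 2 = 1 := by
    rcases hukind with h | h | h <;> rw [h] <;> simp
  have huone : u 0 = 1 ∨ u 1 = 1 ∨ u 2 = 1 := by
    rcases hukind with h | h | h <;> rw [h] <;> simp
  refine ⟨fv, c0, ?_, ?_, ⟨0, rfl⟩, ?_⟩
  · intro hf0
    have hzero : ∀ yy : Fin 3 → ℤ, dotZ fv yy = 0 := by
      intro yy
      rw [hf0]
      simp [dotZ]
    have hz0 : c0 = 0 := by rw [hc0]; exact hzero (v 0)
    rcases huone with h | h | h
    · have := hval1; rw [hzero (v 1), hz0, h] at this; omega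
    · have := hval2; rw [hzero (v 2), hz0, h] at this; omega
    · have := hval3; rw [hzero (v 3), hz0, h] at this; omega
  · intro k
    fin_cases k
    · exact Or.inl rfl
    · show dotZ fv (v 1) = c0 ∨ dotZ fv (v 1) = c0 + 1
      rcases hu0 with h | h
      · left; rw [hval1, h]; ring
      · right; rw [hval1, h]
    · show dotZ fv (v 2) = c0 ∨ dotZ fv (v 2) = c0 + 1
      rcases hu1 with h | h
      · left; rw [hval2, h]; ring
      · right; rw [hval2, h]
    · show dotZ fv (v 3) = c0 ∨ dotZ fv (v 3) = c0 + 1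
      rcases hu2 with h | h
      · left; rw [hval3, h]; ring
      · right; rw [hval3, h]
  · rcases huone with h | h | h
    · exact ⟨1, by rw [hval1, h]⟩
    · exact ⟨2, by rw [hval2, h]⟩
    · exact ⟨3, by rw [hval3, h]⟩
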